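/- arXiv:2407.19882 — 6 statements merged into one kernel-verified Lean document; each statement's English description precedes it below -/
import Mathlib

section
/- For every nonnegative integer n and complex number x, ∑_{k=0}^n C(x,k)·C(x+k,k)·(-4)^k / C(2k,k) − 2x(x+1) · ∑_{k=0}^n C(x,k)·C(x+k,k)·(-4)^k / ((k+1)·C(2k,k)) = 1 + (-1)^n · 2^{2n+1} · (n−x)·(n+1+x)·C(x,n)·C(x+n,n) / ((n+1)·C(2n,n)). -/
open Finset

/-- Generalized binomial coefficient `C(x,k) = x(x-1)⋯(x-k+1)/k!`. -/
noncomputable def gbinom (x : ℂ) (k : ℕ) : ℂ :=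
  (∏ i ∈ Finset.range k, (x - i)) / (k.factorial : ℂ)

lemma gbinom_succ (x : ℂ) (n : ℕ) :
    gbinom x (n + 1) = gbinom x n * (x - n) / (n + 1) := by
  have hf : (n.factorial : ℂ) ≠ 0 := by exact_mod_cast n.factorial_ne_zero
  have hn1 : ((n : ℂ) + 1) ≠ 0 := Nat.cast_add_one_ne_zero n
  simp only [gbinom, Finset.prod_range_succ, Nat.factorial_succ]
  push_cast
  field_simp

lemma gbinom_add_succ (x : ℂ) (n : ℕ) :
    gbinom (x + n + 1) (n + 1) = gbinom (x + n) n * (x + n + 1) / (n + 1) := by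
  have hf : (n.factorial : ℂ) ≠ 0 := by exact_mod_cast n.factorial_ne_zero
  have hn1 : ((n : ℂ) + 1) ≠ 0 := Nat.cast_add_one_ne_zero n
  simp only [gbinom, Nat.factorial_succ]
  rw [Finset.prod_range_succ']
  have h1 : ∀ i ∈ Finset.range n, (x + ↑n + 1 - ↑(i + 1)) = (x + ↑n - ↑i) := by
    intro i _; push_cast; ring
  rw [Finset.prod_congr rfl h1]
  push_cast
  field_simp
  ring

lemma step (g1 g2 c c' p q N x : ℂ) (hN1 : N + 1 ≠ 0) (hN2 : N + 1 + 1 ≠ 0) (hc : c ≠ 0)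
    (hc' : c' ≠ 0) (hrel : c' * (N + 1) = 2 * (2 * N + 1) * c) :
    (1 + p * (2 * q) * (N - x) * (N + 1 + x) * g1 * g2 / ((N + 1) * c)) +
      (g1 * (x - N) / (N + 1) * (g2 * (x + N + 1) / (N + 1)) * (p * q * (-4)) / c' -
        2 * x * (x + 1) *
          (g1 * (x - N) / (N + 1) * (g2 * (x + N + 1) / (N + 1)) * (p * q * (-4)) /
            ((N + 1 + 1) * c'))) =
      1 + p * (-1) * (2 * q * 4) * (N + 1 - x) * (N + 1 + 1 + x) * (g1 * (x - N) / (N + 1)) *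
          (g2 * (x + N + 1) / (N + 1)) / ((N + 1 + 1) * c') := by
  have hD : (N + 1) * c * ((N + 1) * (N + 1) * c' * ((N + 1) * (N + 1) * ((N + 1 + 1) * c'))) ≠ 0 :=
    mul_ne_zero (mul_ne_zero hN1 hc)
      (mul_ne_zero (mul_ne_zero (mul_ne_zero hN1 hN1) hc')
        (mul_ne_zero (mul_ne_zero hN1 hN1) (mul_ne_zero hN2 hc')))
  have hce : c' = 2 * (2 * N + 1) * c / (N + 1) := by
    field_simp
    linear_combination hrel
  have h2N : 2 * N + 1 ≠ 0 := by
    rintro h; apply hc'; rw [hce, h]; simp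
  subst hce
  field_simp
  ring

theorem stmt2 (n : ℕ) (x : ℂ) :
    (∑ k ∈ Finset.range (n + 1),
        gbinom x k * gbinom (x + k) k * (-4 : ℂ) ^ k / (Nat.choose (2 * k) k : ℂ)) -
      2 * x * (x + 1) *
        ∑ k ∈ Finset.range (n + 1),
          gbinom x k * gbinom (x + k) k * (-4 : ℂ) ^ k /
            (((k : ℂ) + 1) * (Nat.choose (2 * k) k : ℂ)) =
      1 + (-1 : ℂ) ^ n * 2 ^ (2 * n + 1) * ((n : ℂ) - x) * ((n : ℂ) + 1 + x) * gbinom x n *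
          gbinom (x + n) n / (((n : ℂ) + 1) * (Nat.choose (2 * n) n : ℂ)) := by
  induction n with
  | zero =>
      simp [gbinom]
      ring
  | succ n ih =>
      have hn1 : ((n : ℂ) + 1) ≠ 0 := Nat.cast_add_one_ne_zero n
      have hn2 : ((n : ℂ) + 1 + 1) ≠ 0 := by
        have h := Nat.cast_add_one_ne_zero (R := ℂ) (n + 1)
        push_cast at h
        exact h
      have hc : ((Nat.choose (2 * n) n : ℕ) : ℂ) ≠ 0 :=
        Nat.cast_ne_zero.mpr (Nat.choose_pos (by omega)).ne'
      have hc' : ((Nat.choose (2 * (n + 1)) (n + 1) : ℕ) : ℂ) ≠ 0 :=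
        Nat.cast_ne_zero.mpr (Nat.choose_pos (by omega)).ne'
      have hrel : ((Nat.choose (2 * (n + 1)) (n + 1) : ℕ) : ℂ) * ((n : ℂ) + 1) =
          2 * (2 * (n : ℂ) + 1) * ((Nat.choose (2 * n) n : ℕ) : ℂ) := by
        have h := Nat.succ_mul_centralBinom_succ n
        unfold Nat.centralBinom at h
        have h2 : (((n + 1) * Nat.choose (2 * (n + 1)) (n + 1) : ℕ) : ℂ) =
            ((2 * (2 * n + 1) * Nat.choose (2 * n) n : ℕ) : ℂ) := by exact_mod_cast h
        push_cast at h2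
        linear_combination h2
      rw [Finset.sum_range_succ
            (fun k => gbinom x k * gbinom (x + k) k * (-4 : ℂ) ^ k /
              (Nat.choose (2 * k) k : ℂ)) (n + 1),
          Finset.sum_range_succ
            (fun k => gbinom x k * gbinom (x + k) k * (-4 : ℂ) ^ k /
              (((k : ℂ) + 1) * (Nat.choose (2 * k) k : ℂ))) (n + 1)]
      push_cast
      rw [show x + ((n : ℂ) + 1) = x + n + 1 by ring, gbinom_succ, gbinom_add_succ]
      rw [sub_eq_iff_eq_add] at ih
      rw [ih]
      rw [show ((-4 : ℂ)) ^ (n + 1) = (-1) ^ n * 4 ^ n * (-4) by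
        rw [pow_succ, show ((-4 : ℂ)) ^ n = (-1) ^ n * 4 ^ n by rw [← mul_pow]; norm_num]]
      rw [show ((-1 : ℂ)) ^ (n + 1) = (-1) ^ n * (-1) by rw [pow_succ]]
      rw [show (2 : ℂ) ^ (2 * (n + 1) + 1) = 2 ^ (2 * n + 1) * 4 by
        rw [show 2 * (n + 1) + 1 = (2 * n + 1) + 2 by ring, pow_add]; norm_num]
      rw [show (2 : ℂ) ^ (2 * n + 1) = 2 * 4 ^ n by
        rw [pow_succ', pow_mul]; norm_num]
      linear_combination step (gbinom x n) (gbinom (x + n) n)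
        ((Nat.choose (2 * n) n : ℕ) : ℂ) ((Nat.choose (2 * (n + 1)) (n + 1) : ℕ) : ℂ)
        ((-1 : ℂ) ^ n) ((4 : ℂ) ^ n) (n : ℂ) x hn1 hn2 hc hc' hrel
end

section
/- For every nonnegative integer n and complex number x, let G_n(x) = ∑_{k=0}^n C(x,k)·C(x+k,k)·(-2)^k / C(2k,k). Then G_n(x) + G_n(x+2) = (-1)^n · 2^{n+1} · C(x+1,n)·C(x+1+n,n) / C(2n,n). -/
open Finset

/-- `G_n(x) = ∑_{k=0}^n C(x,k)·C(x+k,k)·(-2)^k / C(2k,k)`. -/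
noncomputable def G (n : ℕ) (x : ℂ) : ℂ :=
  ∑ k ∈ Finset.range (n + 1),
    gbinom x k * gbinom (x + k) k * (-2 : ℂ) ^ k / (Nat.choose (2 * k) k : ℂ)

private lemma prodsub_succ (y : ℂ) (k : ℕ) :
    ∏ i ∈ Finset.range (k + 1), (y - i) =
      (∏ i ∈ Finset.range k, (y - i)) * (y - k) :=
  Finset.prod_range_succ _ _

private lemma prodsub_succ' (y : ℂ) (k : ℕ) :
    ∏ i ∈ Finset.range (k + 1), (y - i) =
      y * ∏ i ∈ Finset.range k, (y - 1 - i) := by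
  rw [Finset.prod_range_succ']
  simp only [Nat.cast_zero, sub_zero]
  rw [mul_comm]
  congr 1
  refine Finset.prod_congr rfl fun i _ => ?_
  push_cast
  ring

private lemma chooseRel (n : ℕ) :
    (n + 1) * (n + 1) * Nat.choose (2 * n + 2) (n + 1) =
      (2 * n + 2) * (2 * n + 1) * Nat.choose (2 * n) n := by
  have h1 : (2 * n + 2) * Nat.choose (2 * n + 1) n =
      Nat.choose (2 * n + 2) (n + 1) * (n + 1) := Nat.add_one_mul_choose_eq (2 * n + 1) n
  have h2 : (2 * n + 1) * Nat.choose (2 * n) n =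
      Nat.choose (2 * n + 1) (n + 1) * (n + 1) := Nat.add_one_mul_choose_eq (2 * n) n
  have h3 : Nat.choose (2 * n + 1) n = Nat.choose (2 * n + 1) (n + 1) := by
    have := Nat.choose_symm (show n + 1 ≤ 2 * n + 1 by omega)
    have hn : 2 * n + 1 - (n + 1) = n := by omega
    rw [hn] at this
    exact this
  calc (n + 1) * (n + 1) * Nat.choose (2 * n + 2) (n + 1)
      = (n + 1) * (Nat.choose (2 * n + 2) (n + 1) * (n + 1)) := by ring
    _ = (n + 1) * ((2 * n + 2) * Nat.choose (2 * n + 1) n) := by rw [h1]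
    _ = (2 * n + 2) * (Nat.choose (2 * n + 1) (n + 1) * (n + 1)) := by rw [h3]; ring
    _ = (2 * n + 2) * ((2 * n + 1) * Nat.choose (2 * n) n) := by rw [← h2]
    _ = (2 * n + 2) * (2 * n + 1) * Nat.choose (2 * n) n := by ring

private lemma choose_ne (k : ℕ) : ((Nat.choose (2 * k) k : ℕ) : ℂ) ≠ 0 := by
  exact_mod_cast (Nat.choose_pos (by omega : k ≤ 2 * k)).ne'

private lemma fac_ne (k : ℕ) : ((k.factorial : ℕ) : ℂ) ≠ 0 := by
  exact_mod_cast k.factorial_ne_zero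

set_option maxHeartbeats 1000000 in
private lemma step_s3 (n : ℕ) (x : ℂ) :
    (-1 : ℂ) ^ n * 2 ^ (n + 1) * gbinom (x + 1) n * gbinom (x + 1 + n) n /
        (Nat.choose (2 * n) n : ℂ) +
      gbinom x (n + 1) * gbinom (x + (n + 1 : ℕ)) (n + 1) * (-2 : ℂ) ^ (n + 1) /
        (Nat.choose (2 * (n + 1)) (n + 1) : ℂ) +
      gbinom (x + 2) (n + 1) * gbinom (x + 2 + (n + 1 : ℕ)) (n + 1) * (-2 : ℂ) ^ (n + 1) /
        (Nat.choose (2 * (n + 1)) (n + 1) : ℂ) =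
    (-1 : ℂ) ^ (n + 1) * 2 ^ (n + 1 + 1) * gbinom (x + 1) (n + 1) *
        gbinom (x + 1 + (n + 1 : ℕ)) (n + 1) / (Nat.choose (2 * (n + 1)) (n + 1) : ℂ) := by
  -- cast choose relation to ℂ
  have hcC : ((n : ℂ) + 1) * ((n : ℂ) + 1) * (Nat.choose (2 * (n + 1)) (n + 1) : ℂ) =
      (2 * (n : ℂ) + 2) * (2 * (n : ℂ) + 1) * (Nat.choose (2 * n) n : ℂ) := by
    have := chooseRel n
    have h2 : 2 * (n + 1) = 2 * n + 2 := by ring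
    rw [h2]
    exact_mod_cast this
  match n with
  | 0 =>
    simp only [gbinom, G]
    norm_num [Finset.prod_range_succ]
    ring
  | m + 1 =>
    have hn : m + 1 = m + 1 := rfl
    set S : ℂ := ∏ i ∈ Finset.range m, (x - i) with hS
    set W : ℂ := ∏ i ∈ Finset.range m, (x + (m : ℂ) + 2 - i) with hW
    have congr1 : ∀ (a b : ℂ), a = b →
        (∏ i ∈ Finset.range m, (a - i)) = ∏ i ∈ Finset.range m, (b - i) := by
      intro a b h; rw [h]
    -- gbinom (x+1) n = (x+1) * S / n!
    have e1 : gbinom (x + 1) (m+1) = (x + 1) * S / ((m+1).factorial : ℂ) := by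
      rw [gbinom, prodsub_succ']
      congr 2
      refine Finset.prod_congr rfl fun i _ => by ring
    -- gbinom (x+1+n) n = W * (x+2) / n!
    have e2 : gbinom (x + 1 + ((m:ℕ)+1:ℕ)) (m+1) = W * (x + 2) / ((m+1).factorial : ℂ) := by
      rw [gbinom, prodsub_succ]
      congr 2
      · refine Finset.prod_congr rfl fun i _ => ?_
        push_cast; ring
      · push_cast; ring
    -- gbinom x (n+1) = S * (x - m) * (x - m - 1) / (n+1)!
    have e3 : gbinom x (m+1 + 1) = S * (x - m) * (x - m - 1) / ((m+1 + 1).factorial : ℂ) := by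
      rw [gbinom, prodsub_succ, prodsub_succ]
      congr 1
      push_cast; ring
    -- gbinom (x + (n+1)) (n+1) = W * (x+2) * (x+1) / (n+1)!
    have e4 : gbinom (x + ((m:ℕ)+1 + 1 : ℕ)) (m+1 + 1) =
        W * (x + 2) * (x + 1) / ((m+1 + 1).factorial : ℂ) := by
      rw [gbinom, prodsub_succ, prodsub_succ]
      congr 1
      have : (∏ i ∈ Finset.range m, (x + ((m + 1 + 1 : ℕ) : ℂ) - i)) = W := by
        refine Finset.prod_congr rfl fun i _ => ?_
        push_cast; ring
      push_cast at this ⊢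
      rw [this]
      ring
    -- gbinom (x+2) (n+1) = (x+2) * (x+1) * S / (n+1)!
    have e5 : gbinom (x + 2) (m+1 + 1) = (x + 2) * (x + 1) * S / ((m+1 + 1).factorial : ℂ) := by
      rw [gbinom, prodsub_succ', prodsub_succ']
      congr 1
      have : (∏ i ∈ Finset.range m, (x + 2 - 1 - 1 - (i : ℂ))) = S := by
        refine Finset.prod_congr rfl fun i _ => by ring
      rw [this]
      ring
    -- gbinom (x + 2 + (n+1)) (n+1) = (x + m + 4) * (x + m + 3) * W / (n+1)!
    have e6 : gbinom (x + 2 + ((m:ℕ)+1 + 1 : ℕ)) (m+1 + 1) =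
        (x + m + 4) * (x + m + 3) * W / ((m+1 + 1).factorial : ℂ) := by
      rw [gbinom, prodsub_succ', prodsub_succ']
      congr 1
      have : (∏ i ∈ Finset.range m, (x + 2 + ((m + 1 + 1 : ℕ) : ℂ) - 1 - 1 - i)) = W := by
        refine Finset.prod_congr rfl fun i _ => ?_
        push_cast; ring
      push_cast at this ⊢
      rw [this]
      ring
    -- gbinom (x+1) (n+1) = (x+1) * S * (x - m) / (n+1)!
    have e7 : gbinom (x + 1) (m+1 + 1) = (x + 1) * S * (x - m) / ((m+1 + 1).factorial : ℂ) := by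
      rw [gbinom, prodsub_succ', prodsub_succ]
      congr 1
      have : (∏ i ∈ Finset.range m, (x + 1 - 1 - (i : ℂ))) = S := by
        refine Finset.prod_congr rfl fun i _ => by ring
      rw [this]
      ring
    -- gbinom (x + 1 + (n+1)) (n+1) = (x + m + 3) * W * (x+2) / (n+1)!
    have e8 : gbinom (x + 1 + ((m:ℕ)+1 + 1 : ℕ)) (m+1 + 1) =
        (x + m + 3) * W * (x + 2) / ((m+1 + 1).factorial : ℂ) := by
      rw [gbinom, prodsub_succ', prodsub_succ]
      congr 1
      have : (∏ i ∈ Finset.range m, (x + 1 + ((m + 1 + 1 : ℕ) : ℂ) - 1 - i)) = W := by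
        refine Finset.prod_congr rfl fun i _ => ?_
        push_cast; ring
      push_cast at this ⊢
      rw [this]
      ring
    rw [e1, e2, e3, e4, e5, e6, e7, e8]
    have hfac1 := fac_ne (m + 1)
    have hch1 := choose_ne (m + 1)
    have hm2 : ((m : ℂ) + 2) ≠ 0 := by
      have : ((m : ℂ) + 2) = ((m + 2 : ℕ) : ℂ) := by push_cast; ring
      rw [this]
      exact_mod_cast (by omega : (m + 2 : ℕ) ≠ 0)
    have h23 : (2 * (m : ℂ) + 3) ≠ 0 := by
      have : (2 * (m : ℂ) + 3) = ((2 * m + 3 : ℕ) : ℂ) := by push_cast; ring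
      rw [this]; exact_mod_cast (by omega : (2 * m + 3 : ℕ) ≠ 0)
    have h24 : (2 * (m : ℂ) + 4) ≠ 0 := by
      have : (2 * (m : ℂ) + 4) = ((2 * m + 4 : ℕ) : ℂ) := by push_cast; ring
      rw [this]; exact_mod_cast (by omega : (2 * m + 4 : ℕ) ≠ 0)
    have hc2 : ((Nat.choose (2 * (m + 1 + 1)) (m + 1 + 1) : ℕ) : ℂ) =
        (2 * (m : ℂ) + 4) * (2 * (m : ℂ) + 3) *
          ((Nat.choose (2 * (m + 1)) (m + 1) : ℕ) : ℂ) / (((m : ℂ) + 2) * ((m : ℂ) + 2)) := by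
      rw [eq_div_iff (mul_ne_zero hm2 hm2)]
      push_cast at hcC ⊢
      linear_combination hcC
    have hc2inv : (((Nat.choose (2 * (m + 1 + 1)) (m + 1 + 1) : ℕ) : ℂ))⁻¹ =
        ((m : ℂ) + 2) /
          (2 * (2 * (m : ℂ) + 3) *
            ((Nat.choose (2 * (m + 1)) (m + 1) : ℕ) : ℂ)) := by
      rw [hc2, inv_div, div_eq_div_iff (mul_ne_zero (mul_ne_zero h24 h23) hch1)
        (mul_ne_zero (mul_ne_zero two_ne_zero h23) hch1)]
      ring
    have hf2 : (((m + 1 + 1).factorial : ℕ) : ℂ) =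
        ((m : ℂ) + 2) * (((m + 1).factorial : ℕ) : ℂ) := by
      rw [Nat.factorial_succ]
      push_cast; ring
    rw [hf2]
    have hpow : ∀ k : ℕ, (-2 : ℂ) ^ k = (-1) ^ k * 2 ^ k := fun k => by
      rw [← neg_one_mul, mul_pow]
    simp only [hpow]
    simp only [div_eq_mul_inv]
    rw [hc2inv]
    set f : ℂ := (((m + 1).factorial : ℕ) : ℂ) with hf
    set c : ℂ := ((Nat.choose (2 * (m + 1)) (m + 1) : ℕ) : ℂ) with hc
    set b : ℂ := (m : ℂ) + 2 with hb
    set d : ℂ := 2 * (m : ℂ) + 3 with hd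
    have hbne : b ≠ 0 := hm2
    have hdne : d ≠ 0 := h23
    clear_value f c b d
    field_simp
    have hY : f * f * c * (b * f * (b * f) * (2 * d * c)) ≠ 0 := by
      apply mul_ne_zero (mul_ne_zero (mul_ne_zero hfac1 hfac1) hch1)
      exact mul_ne_zero (mul_ne_zero (mul_ne_zero hbne hfac1) (mul_ne_zero hbne hfac1))
        (mul_ne_zero (mul_ne_zero two_ne_zero hdne) hch1)
    rw [hb, hd]
    ring

theorem stmt3 (n : ℕ) (x : ℂ) :
    G n x + G n (x + 2) =
      (-1 : ℂ) ^ n * 2 ^ (n + 1) * gbinom (x + 1) n * gbinom (x + 1 + n) n /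
        (Nat.choose (2 * n) n : ℂ) := by
  induction n with
  | zero => norm_num [G, gbinom]
  | succ n ih =>
    have hGx : G (n + 1) x = G n x +
        gbinom x (n + 1) * gbinom (x + (n + 1 : ℕ)) (n + 1) * (-2 : ℂ) ^ (n + 1) /
          (Nat.choose (2 * (n + 1)) (n + 1) : ℂ) := by
      rw [G, G, Finset.sum_range_succ]
    have hGx2 : G (n + 1) (x + 2) = G n (x + 2) +
        gbinom (x + 2) (n + 1) * gbinom (x + 2 + (n + 1 : ℕ)) (n + 1) * (-2 : ℂ) ^ (n + 1) /
          (Nat.choose (2 * (n + 1)) (n + 1) : ℂ) := by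
      rw [G, G, Finset.sum_range_succ]
    rw [hGx, hGx2]
    have := step_s3 n x
    rw [← this, ← ih]
    ring
end

section
/- Let p be an odd prime. Then p · ∑_{k=1}^{p-1} 4^k / (k·C(2k,k)) ≡ −2 + 2p − 4p·q_p(2) (mod p²), where q_p(2) = (2^{p-1} − 1)/p is the Fermat quotient. -/
open Finset

lemma babbage (p : ℕ) (hp : p.Prime) : ∃ m : ℕ, Nat.choose (2 * p) p = 2 + p ^ 2 * m := by
  have hv : (2 * p).choose p = ∑ i ∈ range (p + 1), p.choose i * p.choose (p - i) := by
    rw [two_mul, Nat.add_choose_eq, Finset.Nat.sum_antidiagonal_eq_sum_range_succ_mk]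
  have h2 : 2 ≤ p := hp.two_le
  have hsplit : range (p + 1) = insert 0 (insert p (Ioo 0 p)) := by
    ext i; simp [Nat.lt_succ_iff]; omega
  have hdvd : p ^ 2 ∣ ∑ i ∈ Ioo 0 p, p.choose i * p.choose (p - i) := by
    refine Finset.dvd_sum fun i hi => ?_
    simp only [mem_Ioo] at hi
    have h1 : p ∣ p.choose i := Nat.Prime.dvd_choose_self hp (by omega) hi.2
    have h2' : p ∣ p.choose (p - i) := Nat.Prime.dvd_choose_self hp (by omega) (by omega)
    rw [sq]; exact mul_dvd_mul h1 h2'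
  obtain ⟨m, hm⟩ := hdvd
  refine ⟨m, ?_⟩
  rw [hv, hsplit, Finset.sum_insert (by simp; omega), Finset.sum_insert (by simp), hm]
  simp [Nat.choose_self, Nat.sub_self]
  omega

lemma sum_id (p : ℕ) [Fact p.Prime] (n : ℕ) :
    (∑ k ∈ Finset.Icc 1 n, (4 : ℚ_[p]) ^ k / ((k : ℚ_[p]) * (Nat.choose (2 * k) k : ℚ_[p]))) =
    2 * 4 ^ n / (Nat.choose (2 * n) n : ℚ_[p]) - 2 := by
  induction n with
  | zero => simp
  | succ n ih =>
    rw [Finset.sum_Icc_succ_top (by omega), ih]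
    have hrel := Nat.succ_mul_centralBinom_succ n
    rw [Nat.centralBinom, Nat.centralBinom] at hrel
    have hrelQ : ((n : ℚ_[p]) + 1) * (Nat.choose (2 * (n + 1)) (n + 1) : ℚ_[p]) =
        2 * (2 * n + 1) * (Nat.choose (2 * n) n : ℚ_[p]) := by
      exact_mod_cast congrArg (Nat.cast : ℕ → ℚ_[p]) hrel
    have hB : (Nat.choose (2 * n) n : ℚ_[p]) ≠ 0 :=
      Nat.cast_ne_zero.mpr (Nat.choose_pos (by omega)).ne'
    have hB' : (Nat.choose (2 * (n + 1)) (n + 1) : ℚ_[p]) ≠ 0 :=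
      Nat.cast_ne_zero.mpr (Nat.choose_pos (by omega)).ne'
    have hn1 : ((n : ℚ_[p]) + 1) ≠ 0 := Nat.cast_add_one_ne_zero n
    push_cast
    field_simp
    linear_combination (2 * 4 ^ n) * hrelQ

theorem stmt5 (p : ℕ) [Fact p.Prime] (hp : Odd p) :
    ∃ c : ℤ_[p],
      (p : ℚ_[p]) * (∑ k ∈ Finset.Icc 1 (p - 1), (4 : ℚ_[p]) ^ k / ((k : ℚ_[p]) * (Nat.choose (2 * k) k : ℚ_[p]))) -
        (-2 + 2 * (p : ℚ_[p]) - 4 * (p : ℚ_[p]) * (((2 : ℚ_[p]) ^ (p - 1) - 1) / (p : ℚ_[p]))) =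
      (p : ℚ_[p]) ^ 2 * (c : ℚ_[p]) := by
  have hprime : p.Prime := Fact.out
  have h2ne : (2 : ZMod p) ≠ 0 := by
    intro h
    have h1 : (p : ℤ) ∣ 2 := (ZMod.intCast_zmod_eq_zero_iff_dvd 2 p).mp (by exact_mod_cast h)
    have hpd : p ∣ 2 := by exact_mod_cast h1
    have := (Nat.prime_dvd_prime_iff_eq hprime Nat.prime_two).mp hpd
    rw [this] at hp
    simp [Nat.odd_iff] at hp
  have hferm : (2 : ZMod p) ^ (p - 1) = 1 := ZMod.pow_card_sub_one_eq_one h2ne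
  have hdvd : (p : ℤ) ∣ 2 ^ (p - 1) - 1 := by
    rw [← ZMod.intCast_zmod_eq_zero_iff_dvd]
    push_cast
    rw [hferm]; ring
  obtain ⟨t, ht⟩ := hdvd
  obtain ⟨m, hm⟩ := babbage p hprime
  obtain ⟨n, hpn⟩ : ∃ n, p = n + 1 := ⟨p - 1, by have := hprime.two_le; omega⟩
  have hpodd : ¬ ((n + 1) ∣ 2) := by
    intro hd
    rw [hpn] at hprime hp
    have := (Nat.prime_dvd_prime_iff_eq hprime Nat.prime_two).mp hd
    rw [this] at hp
    simp [Nat.odd_iff] at hp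
  subst hpn
  simp only [Nat.add_sub_cancel] at ht ⊢
  rw [sum_id]
  have hPne : ((n : ℚ_[n+1]) + 1) ≠ 0 := Nat.cast_add_one_ne_zero n
  have hPcast : ((n + 1 : ℕ) : ℚ_[n+1]) = (n : ℚ_[n+1]) + 1 := by push_cast; ring
  set B1 : ℚ_[n+1] := (Nat.choose (2 * n) n : ℚ_[n+1]) with hB1
  set Bp : ℚ_[n+1] := (Nat.choose (2 * (n + 1)) (n + 1) : ℚ_[n+1]) with hBp
  have hB1ne : B1 ≠ 0 := Nat.cast_ne_zero.mpr (Nat.choose_pos (by omega)).ne'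
  have hBpne : Bp ≠ 0 := Nat.cast_ne_zero.mpr (Nat.choose_pos (by omega)).ne'
  have hrel := Nat.succ_mul_centralBinom_succ n
  rw [Nat.centralBinom, Nat.centralBinom] at hrel
  have hrelQ : ((n : ℚ_[n+1]) + 1) * Bp = 2 * (2 * n + 1) * B1 := by
    rw [hB1, hBp]
    exact_mod_cast congrArg (Nat.cast : ℕ → ℚ_[n+1]) hrel
  have hodd2 : (2 * (2 * (n : ℚ_[n+1]) + 1)) ≠ 0 := by
    have h0 : ((2 * (2 * n + 1) : ℕ) : ℚ_[n+1]) ≠ 0 := Nat.cast_ne_zero.mpr (by omega)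
    push_cast at h0
    convert h0 using 2
  have hmQ : Bp = 2 + ((n : ℚ_[n+1]) + 1) ^ 2 * (m : ℚ_[n+1]) := by
    rw [hBp, hm]; push_cast; ring
  have hq : (2 : ℚ_[n+1]) ^ n = 1 + ((n : ℚ_[n+1]) + 1) * (t : ℚ_[n+1]) := by
    have h0 := congrArg (Int.cast : ℤ → ℚ_[n+1]) ht
    push_cast at h0
    linear_combination h0
  have h4 : (4 : ℚ_[n+1]) ^ n = ((2 : ℚ_[n+1]) ^ n) ^ 2 := by
    rw [show (4 : ℚ_[n+1]) = 2 ^ 2 by norm_num, ← pow_mul, mul_comm, pow_mul]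
  set E : ℤ := 16 * t + 8 * (n + 1) * t ^ 2 - 4 * t ^ 2 -
      (m : ℤ) * (4 * (n + 1) - 2 - 4 * (n + 1) * t) with hE
  have hBpnorm : ‖Bp‖ = 1 := by
    have hle : ‖Bp‖ ≤ 1 := by
      rw [hBp]
      have h0 := Padic.norm_int_le_one (p := n + 1) ((Nat.choose (2 * (n + 1)) (n + 1) : ℕ) : ℤ)
      push_cast at h0 ⊢
      exact h0
    rcases lt_or_eq_of_le hle with hlt | heq
    · exfalso
      have hd : ((n + 1 : ℕ) : ℤ) ∣ ((Nat.choose (2 * (n + 1)) (n + 1) : ℕ) : ℤ) := by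
        apply (Padic.norm_intCast_lt_one_iff (p := n + 1)).mp
        rw [hBp] at hlt
        push_cast at hlt ⊢
        exact hlt
      have hd2 : (n + 1) ∣ Nat.choose (2 * (n + 1)) (n + 1) := by exact_mod_cast hd
      rw [hm] at hd2
      have : (n + 1) ∣ 2 := by
        have h1 : (n + 1) ∣ (n + 1) ^ 2 * m := ⟨(n + 1) * m, by ring⟩
        have h2 := Nat.dvd_sub hd2 h1
        simpa using h2
      exact hpodd this
    · exact heq
  have hx : ‖(E : ℚ_[n+1]) / Bp‖ ≤ 1 := by
    rw [norm_div, hBpnorm, div_one]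
    exact Padic.norm_int_le_one E
  refine ⟨⟨(E : ℚ_[n+1]) / Bp, hx⟩, ?_⟩
  have hcoe : ((⟨(E : ℚ_[n+1]) / Bp, hx⟩ : ℤ_[n+1]) : ℚ_[n+1]) = (E : ℚ_[n+1]) / Bp := rfl
  rw [hcoe, hPcast]
  have hB1eq : B1 = ((n : ℚ_[n+1]) + 1) * Bp / (2 * (2 * n + 1)) := by
    rw [eq_div_iff hodd2]
    linear_combination -hrelQ
  have hEQ : (E : ℚ_[n+1]) = 16 * t + 8 * ((n : ℚ_[n+1]) + 1) * (t : ℚ_[n+1]) ^ 2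
      - 4 * (t : ℚ_[n+1]) ^ 2
      - (m : ℚ_[n+1]) * (4 * ((n : ℚ_[n+1]) + 1) - 2 - 4 * ((n : ℚ_[n+1]) + 1) * t) := by
    rw [hE]; push_cast; ring
  rw [h4, hq, hB1eq, hEQ, hmQ]
  have hBpne2 : (2 + ((n : ℚ_[n+1]) + 1) ^ 2 * (m : ℚ_[n+1])) ≠ 0 := by rw [← hmQ]; exact hBpne
  field_simp
  ring
end

section
/- Let p be an odd prime. Then p · ∑_{k=1}^{p-1} 4^k / ((2k+1)·C(2k,k)) ≡ 0 (mod p²). -/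
open Finset

lemma central_mod (p : ℕ) (hp : p.Prime) : ((2 * p).choose p : ZMod p) = 2 := by
  have h2 := Nat.add_choose_eq p p p
  have hp2 := hp.two_le
  have hsub : ({(0, p), (p, 0)} : Finset (ℕ × ℕ)) ⊆ Finset.HasAntidiagonal.antidiagonal p := by
    intro ij hij
    simp only [Finset.mem_insert, Finset.mem_singleton] at hij
    rcases hij with h | h <;> subst h <;> simp
  have hzero : ∀ ij ∈ Finset.HasAntidiagonal.antidiagonal p, ij ∉ ({(0, p), (p, 0)} : Finset (ℕ × ℕ)) →
      ((p.choose ij.1 * p.choose ij.2 : ℕ) : ZMod p) = 0 := by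
    rintro ⟨a, b⟩ hab hnot
    simp only [Finset.HasAntidiagonal.mem_antidiagonal] at hab
    simp only [Finset.mem_insert, Finset.mem_singleton, Prod.mk.injEq, not_or] at hnot
    have ha0 : a ≠ 0 := by rintro rfl; exact hnot.1 ⟨rfl, by omega⟩
    have hap : a < p := by
      rcases Nat.lt_or_ge a p with h | h
      · exact h
      · exact absurd ⟨by omega, by omega⟩ hnot.2
    have : p ∣ p.choose a := Nat.Prime.dvd_choose_self hp ha0 hap
    rw [Nat.cast_mul, (ZMod.natCast_eq_zero_iff _ _).mpr this, zero_mul]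
  have := Finset.sum_subset hsub hzero
  calc ((2 * p).choose p : ZMod p)
      = ∑ ij ∈ Finset.HasAntidiagonal.antidiagonal p, ((p.choose ij.1 * p.choose ij.2 : ℕ) : ZMod p) := by
        rw [two_mul, h2]; push_cast; rfl
    _ = ∑ ij ∈ ({(0, p), (p, 0)} : Finset (ℕ × ℕ)), ((p.choose ij.1 * p.choose ij.2 : ℕ) : ZMod p) :=
        this.symm
    _ = 2 := by
        rw [Finset.sum_insert (by simp; omega), Finset.sum_singleton]
        simp [Nat.choose_self, Nat.choose_zero_right]
        ring

lemma tele (p : ℕ) [Fact p.Prime] (n : ℕ) :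
    ∑ k ∈ Finset.Icc 1 n,
        (4 : ℚ_[p]) ^ k / ((2 * (k : ℚ_[p]) + 1) * (Nat.choose (2 * k) k : ℚ_[p]))
    = 4 ^ (n + 1) / (Nat.choose (2 * (n + 1)) (n + 1) : ℚ_[p]) - 2 := by
  induction n with
  | zero => norm_num
  | succ n ih =>
    rw [Finset.sum_Icc_succ_top (by omega), ih]
    have key : ((n + 2 : ℕ) : ℚ_[p]) * (Nat.choose (2 * (n + 2)) (n + 2) : ℚ_[p])
        = 2 * (2 * (n + 1 : ℕ) + 1) * (Nat.choose (2 * (n + 1)) (n + 1) : ℚ_[p]) := by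
      have h := Nat.succ_mul_centralBinom_succ (n + 1)
      simp only [Nat.centralBinom] at h
      have h2 : (n + 1 + 1) * (2 * (n + 1 + 1)).choose (n + 1 + 1)
          = 2 * (2 * (n + 1) + 1) * (2 * (n + 1)).choose (n + 1) := h
      exact_mod_cast congrArg (Nat.cast : ℕ → ℚ_[p]) h2
    have hC1 : (Nat.choose (2 * (n + 1)) (n + 1) : ℚ_[p]) ≠ 0 :=
      Nat.cast_ne_zero.mpr (Nat.choose_pos (by omega)).ne'
    have hC2 : (Nat.choose (2 * (n + 2)) (n + 2) : ℚ_[p]) ≠ 0 :=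
      Nat.cast_ne_zero.mpr (Nat.choose_pos (by omega)).ne'
    have ho : (2 * ((n : ℚ_[p]) + 1) + 1) ≠ 0 := by
      have h3 : ((2 * n + 3 : ℕ) : ℚ_[p]) ≠ 0 := Nat.cast_ne_zero.mpr (by omega)
      intro h
      apply h3
      push_cast
      linear_combination h
    push_cast
    push_cast at key
    field_simp
    ring_nf
    ring_nf at key
    linear_combination (4 : ℚ_[p]) ^ n * 8 * key

theorem stmt6 (p : ℕ) [Fact p.Prime] (hp : Odd p) :
    ∃ c : ℤ_[p],
      (p : ℚ_[p]) * (∑ k ∈ Finset.Icc 1 (p - 1),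
          (4 : ℚ_[p]) ^ k / ((2 * (k : ℚ_[p]) + 1) * (Nat.choose (2 * k) k : ℚ_[p]))) =
      (p : ℚ_[p]) ^ 2 * (c : ℚ_[p]) := by
  have hp' : p.Prime := Fact.out
  have hppos : 0 < p := hp'.pos
  have hsum := tele p (p - 1)
  have hpe : p - 1 + 1 = p := by omega
  rw [hpe] at hsum
  rw [hsum]
  set C : ℕ := Nat.choose (2 * p) p with hC
  have hCmod : (C : ZMod p) = 2 := central_mod p hp'
  have h2ne : (2 : ZMod p) ≠ 0 := by
    intro h
    have : p ∣ 2 := by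
      have := (ZMod.natCast_eq_zero_iff 2 p).mp (by exact_mod_cast h)
      exact this
    have hp2 : p = 2 := (Nat.prime_dvd_prime_iff_eq hp' Nat.prime_two).mp this
    rw [hp2] at hp
    simp [Nat.odd_iff] at hp
  have hpC : ¬ (p : ℤ) ∣ (C : ℤ) := by
    intro h
    have h0 : ((C : ℤ) : ZMod p) = 0 := (ZMod.intCast_zmod_eq_zero_iff_dvd _ _).mpr h
    rw [Int.cast_natCast, hCmod] at h0
    exact h2ne h0
  have hdvd : (p : ℤ) ∣ (4 ^ p - 2 * C : ℤ) := by
    rw [← ZMod.intCast_zmod_eq_zero_iff_dvd]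
    push_cast
    rw [hCmod, ZMod.pow_card]
    ring
  obtain ⟨m, hm⟩ := hdvd
  have hnormC : ‖(C : ℚ_[p])‖ = 1 := by
    apply le_antisymm
    · exact_mod_cast Padic.norm_int_le_one (C : ℤ)
    · by_contra h
      push_neg at h
      have : ‖((C : ℤ) : ℚ_[p])‖ < 1 := by exact_mod_cast h
      exact hpC ((Padic.norm_intCast_lt_one_iff).mp this)
  have hCne : (C : ℚ_[p]) ≠ 0 := by
    intro h; rw [h, norm_zero] at hnormC; norm_num at hnormC
  refine ⟨⟨(m : ℚ_[p]) / (C : ℚ_[p]), ?_⟩, ?_⟩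
  · rw [norm_div, hnormC, div_one]
    exact Padic.norm_int_le_one m
  · show (p : ℚ_[p]) * _ = (p : ℚ_[p]) ^ 2 * ((m : ℚ_[p]) / (C : ℚ_[p]))
    have hmQ : (4 : ℚ_[p]) ^ p - 2 * C = p * m := by
      exact_mod_cast congrArg (Int.cast : ℤ → ℚ_[p]) hm
    field_simp
    linear_combination (p : ℚ_[p]) * hmQ
end

section
/- Let p be an odd prime. Then p · ∑_{k=1}^{p-1} 2^k / ((2k+1)·C(2k,k)) ≡ (−1/p) − p (mod p²), where (−1/p) is the Legendre symbol of −1 modulo p, i.e., (−1)^{(p−1)/2}. -/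
open Finset

variable {K : Type*} [Field K] [CharZero K]

lemma partial_fractions (k : ℕ) : ∀ (x : K), (∀ j, j ≤ k → x + (j:K) ≠ 0) →
    ∑ n ∈ range (k+1), (-1:K)^n * (k.choose n : K) / (x + n)
      = (k.factorial : K) / ∏ j ∈ range (k+1), (x + (j:K)) := by
  induction k with
  | zero => intro x hx; simp
  | succ k ih =>
    intro x hx
    have hx' : ∀ j, j ≤ k → x + (j:K) ≠ 0 := fun j hj => hx j (by omega)
    have hx1 : ∀ j, j ≤ k → (x+1) + (j:K) ≠ 0 := by
      intro j hj h
      exact hx (j+1) (by omega) (by push_cast; linear_combination h)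
    have hxk : x + ((k+1 : ℕ):K) ≠ 0 := hx (k+1) le_rfl
    have hP : (∏ j ∈ range (k+1), (x + (j:K))) ≠ 0 :=
      prod_ne_zero_iff.2 (fun j hj => hx' j (by have := mem_range.mp hj; omega))
    have hQ : (∏ j ∈ range (k+1), ((x+1) + (j:K))) ≠ 0 :=
      prod_ne_zero_iff.2 (fun j hj => hx1 j (by have := mem_range.mp hj; omega))
    have IH1 := ih x hx'
    have IH2 := ih (x+1) hx1
    have split : ∀ n ∈ range (k+2), (-1:K)^n * ((k+1).choose n : K) / (x + n)
        = (-1:K)^n * (k.choose n : K) / (x + n)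
          + (-1:K)^n * (((k+1).choose n : K) - (k.choose n : K)) / (x + n) := by
      intro n _; ring
    rw [Finset.sum_congr rfl split, Finset.sum_add_distrib]
    have ext : ∑ n ∈ range (k+2), (-1:K)^n * (k.choose n : K) / (x + n)
        = ∑ n ∈ range (k+1), (-1:K)^n * (k.choose n : K) / (x + n) := by
      rw [Finset.sum_range_succ]
      simp [Nat.choose_succ_self]
    have pieceB : ∑ n ∈ range (k+2), (-1:K)^n * (((k+1).choose n : K) - (k.choose n : K)) / (x + n)
        = ∑ i ∈ range (k+1), -((-1:K)^i * (k.choose i : K) / ((x+1) + i)) := by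
      rw [Finset.sum_range_succ']
      have h0 : (-1:K)^0 * (((k+1).choose 0 : K) - (k.choose 0 : K)) / (x + (0:ℕ)) = 0 := by
        simp
      rw [h0, add_zero]
      refine Finset.sum_congr rfl fun i hi => ?_
      have hcc : (((k+1).choose (i+1) : ℕ) : K) = (k.choose i : K) + (k.choose (i+1) : K) := by
        rw [Nat.choose_succ_succ]; push_cast; ring
      rw [hcc]
      push_cast
      ring
    rw [ext, pieceB, IH1, Finset.sum_neg_distrib, IH2]
    have e1 : ∏ j ∈ range (k+2), (x + (j:K))
        = (∏ j ∈ range (k+1), (x + (j:K))) * (x + ((k+1:ℕ):K)) :=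
      Finset.prod_range_succ _ _
    have e2 : ∏ j ∈ range (k+2), (x + (j:K))
        = (∏ j ∈ range (k+1), (x + (((j:ℕ)+1:ℕ):K))) * (x + ((0:ℕ):K)) :=
      Finset.prod_range_succ' _ _
    have e3 : ∏ j ∈ range (k+1), (x + (((j:ℕ)+1:ℕ):K))
        = ∏ j ∈ range (k+1), ((x+1) + (j:K)) :=
      Finset.prod_congr rfl (fun j _ => by push_cast; ring)
    have hprod : (∏ j ∈ range (k+1), (x + (j:K))) * (x + ((k+1:ℕ):K))
        = x * ∏ j ∈ range (k+1), ((x+1) + (j:K)) := by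
      rw [← e1, e2, e3]; push_cast; ring
    have hfac : ((k+1).factorial : K) = ((k+1:ℕ) : K) * (k.factorial : K) := by
      rw [Nat.factorial_succ]; push_cast; ring
    rw [e1, hfac, ← sub_eq_add_neg, div_sub_div _ _ hP hQ,
      div_eq_div_iff (mul_ne_zero hP hQ) (mul_ne_zero hP hxk)]
    linear_combination (-(k.factorial:K) * (∏ j ∈ range (k+1), (x + (j:K)))) * hprod

lemma half_prod (k : ℕ) : ∏ j ∈ range (k+1), ((1/2 : K) + (j:K))
    = ((2*k+1).factorial : K) / (4^k * 2 * (k.factorial : K)) := by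
  induction k with
  | zero => norm_num
  | succ k ih =>
    have fact1 : ((2*(k+1)+1).factorial : K)
        = ((2*k+3:ℕ):K) * ((2*k+2:ℕ):K) * ((2*k+1).factorial : K) := by
      have h : 2*(k+1)+1 = (2*k+1) + 1 + 1 := by ring
      rw [h, Nat.factorial_succ, Nat.factorial_succ]
      push_cast; ring
    have fact2 : (((k+1).factorial : K)) = ((k:K)+1) * (k.factorial:K) := by
      rw [Nat.factorial_succ]; push_cast; ring
    rw [Finset.prod_range_succ, ih, fact1, fact2, pow_succ]
    have h4 : (4:K)^k ≠ 0 := pow_ne_zero _ (by norm_num)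
    have hf : ((k.factorial : K)) ≠ 0 := by exact_mod_cast Nat.factorial_ne_zero k
    have hk1 : ((k:K)+1) ≠ 0 := by
      intro h
      have : ((k+1:ℕ):K) = 0 := by push_cast; linear_combination h
      rw [Nat.cast_eq_zero] at this; omega
    field_simp
    push_cast
    ring

lemma J_eval (k : ℕ) : ∑ n ∈ range (k+1), (-1:K)^n * (k.choose n : K) / (2*(n:K)+1)
    = 4^k * (k.factorial : K) * (k.factorial : K) / ((2*k+1).factorial : K) := by
  have hx : ∀ j, j ≤ k → (1/2 : K) + (j:K) ≠ 0 := by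
    intro j hj h
    have : ((2*j+1 : ℕ) : K) = 0 := by push_cast; linear_combination 2*h
    rw [Nat.cast_eq_zero] at this
    omega
  have hpf := partial_fractions k (1/2 : K) hx
  have step : ∀ n ∈ range (k+1), (-1:K)^n * (k.choose n : K) / (2*(n:K)+1)
      = (1/2 : K) * ((-1:K)^n * (k.choose n : K) / ((1/2:K) + n)) := by
    intro n hn
    have h1 : (2*(n:K)+1) ≠ 0 := by
      intro h
      have : ((2*n+1 : ℕ) : K) = 0 := by push_cast; linear_combination h
      rw [Nat.cast_eq_zero] at this; omega
    have h1' : (1 + (n:K)*2) ≠ 0 := fun h => h1 (by linear_combination h)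
    have h2 : (2*(n:K)+1) = 2 * ((1/2:K) + (n:K)) := by ring
    rw [div_mul_div_comm, one_mul, ← h2]
  rw [Finset.sum_congr rfl step, ← Finset.mul_sum, hpf, half_prod]
  have hf : ((2*k+1).factorial : K) ≠ 0 := by exact_mod_cast Nat.factorial_ne_zero _
  have hf2 : ((k.factorial : K)) ≠ 0 := by exact_mod_cast Nat.factorial_ne_zero k
  have h4 : (4:K)^k ≠ 0 := pow_ne_zero _ (by norm_num)
  field_simp

lemma term_eq (k : ℕ) : (2:K)^k / ((2*(k:K)+1) * ((2*k).choose k : K))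
    = (1/2^k) * (4^k * (k.factorial : K) * (k.factorial : K) / ((2*k+1).factorial : K)) := by
  have hc := Nat.choose_mul_factorial_mul_factorial (show k ≤ 2*k by omega)
  have h2k : (2*k - k) = k := by omega
  rw [h2k] at hc
  have hcK : (((2*k).choose k : K)) * (k.factorial : K) * (k.factorial : K)
      = ((2*k).factorial : K) := by exact_mod_cast congrArg (Nat.cast : ℕ → K) hc
  have hfs : ((2*k+1).factorial : K) = ((2*k+1 : ℕ) : K) * ((2*k).factorial : K) := by
    rw [Nat.factorial_succ]; push_cast; ring
  have h1 : (2*(k:K)+1) ≠ 0 := by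
    intro h
    have : ((2*k+1 : ℕ) : K) = 0 := by push_cast; linear_combination h
    rw [Nat.cast_eq_zero] at this; omega
  have h2 : (((2*k).choose k : K)) ≠ 0 :=
    Nat.cast_ne_zero.2 (Nat.choose_pos (show k ≤ 2*k by omega)).ne'
  have h3 : ((2*k+1).factorial : K) ≠ 0 := by exact_mod_cast Nat.factorial_ne_zero _
  have h4 : (2:K)^k ≠ 0 := pow_ne_zero _ (by norm_num)
  have h44 : (4:K)^k = 2^k * 2^k := by rw [← mul_pow]; norm_num
  rw [h44]
  field_simp
  push_cast at hcK hfs ⊢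
  linear_combination hfs - (2*(k:K)+1) * hcK

lemma nat_sum_choose_succ (N n : ℕ) :
    ∑ j ∈ range (n+1), (N+1).choose j
      = ∑ j ∈ range (n+1), N.choose j + ∑ j ∈ range n, N.choose j := by
  induction n with
  | zero => simp
  | succ n ih =>
    rw [Finset.sum_range_succ, ih, Nat.choose_succ_succ',
      Finset.sum_range_succ (fun j => N.choose j) (n+1),
      Finset.sum_range_succ (fun j => N.choose j) n]
    ring

lemma starG (n : ℕ) : ∀ N, n ≤ N →
    ∑ k ∈ Ico n N, ((k.choose n : K) / 2^k)
      = 2 - 2 * (∑ j ∈ range (n+1), (N.choose j : K)) / 2^N := by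
  intro N
  induction N with
  | zero =>
    intro hn
    interval_cases n
    simp
  | succ N ih =>
    intro hn
    rcases Nat.lt_or_ge N n with h | h
    · -- n = N+1
      have hnN : n = N+1 := by omega
      subst hnN
      rw [Finset.Ico_self, Finset.sum_empty]
      have : ∑ j ∈ range (N+1+1), ((N+1).choose j : K) = ((2^(N+1) : ℕ) : K) := by
        rw [← Nat.cast_sum]
        exact_mod_cast congrArg (Nat.cast : ℕ → K) (Nat.sum_range_choose (N+1))
      rw [this]
      have h2 : (2:K)^(N+1) ≠ 0 := pow_ne_zero _ (by norm_num)
      push_cast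
      field_simp
      norm_num
    · have hih := ih h
      rw [Finset.sum_Ico_succ_top h, hih]
      have hc : ∑ j ∈ range (n+1), ((N+1).choose j : K)
          = ∑ j ∈ range (n+1), (N.choose j : K) + ∑ j ∈ range n, (N.choose j : K) := by
        rw [← Nat.cast_sum, ← Nat.cast_sum, ← Nat.cast_sum, ← Nat.cast_add]
        exact_mod_cast congrArg (Nat.cast : ℕ → K) (nat_sum_choose_succ N n)
      rw [hc]
      have hTn : ∑ j ∈ range (n+1), (N.choose j : K)
          = ∑ j ∈ range n, (N.choose j : K) + (N.choose n : K) := by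
        rw [Finset.sum_range_succ]
      rw [hTn]
      have h2 : (2:K)^N ≠ 0 := pow_ne_zero _ (by norm_num)
      rw [pow_succ]
      field_simp
      ring

lemma swap_sum (p : ℕ) (f : ℕ → ℕ → K) :
    ∑ k ∈ range p, ∑ n ∈ range (k+1), f k n
      = ∑ n ∈ range p, ∑ k ∈ Ico n p, f k n := by
  apply Finset.sum_comm'
  intro k n
  simp only [mem_range, mem_Ico]
  omega

lemma norm_sum_le_padic {p : ℕ} [Fact p.Prime] (s : Finset ℕ) (f : ℕ → ℚ_[p]) (C : ℝ)
    (hC : 0 ≤ C) (h : ∀ i ∈ s, ‖f i‖ ≤ C) : ‖∑ i ∈ s, f i‖ ≤ C := by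
  classical
  induction s using Finset.induction with
  | empty => simpa using hC
  | @insert a s hnot ih =>
    rw [Finset.sum_insert hnot]
    exact le_trans (Padic.nonarchimedean _ _)
      (max_le (h _ (Finset.mem_insert_self a s))
        (ih fun i hi => h i (Finset.mem_insert_of_mem hi)))

lemma unit_norm {p : ℕ} [Fact p.Prime] (d : ℕ) (hd : ¬ (p ∣ d)) : ‖((d:ℕ) : ℚ_[p])‖ = 1 := by
  have le1 : ‖((d:ℤ) : ℚ_[p])‖ ≤ 1 := Padic.norm_int_le_one _
  have : ((d:ℤ) : ℚ_[p]) = ((d:ℕ) : ℚ_[p]) := by push_cast; ring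
  rw [this] at le1
  rcases lt_or_eq_of_le le1 with h | h
  · exfalso
    apply hd
    have : ‖((d:ℤ) : ℚ_[p])‖ < 1 := by rw [this]; exact h
    have hdvd := (Padic.norm_intCast_lt_one_iff (k := (d:ℤ))).1 this
    exact_mod_cast hdvd
  · exact h

lemma not_dvd_odd_lt {p : ℕ} (hp : p.Prime) (h m : ℕ) (hph : p = 2*h+1) (hm : m < p)
    (hmh : m ≠ h) : ¬ (p ∣ (2*m+1)) := by
  intro hdvd
  rcases hdvd with ⟨c, hc⟩
  have hc0 : c ≠ 0 := by rintro rfl; omega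
  have hc2 : c < 2 := by nlinarith [hp.two_le]
  have : c = 1 := by omega
  subst this
  omega

theorem stmt7 (p : ℕ) [Fact p.Prime] (hp : Odd p) :
    ∃ c : ℤ_[p],
      (p : ℚ_[p]) * (∑ k ∈ Finset.Icc 1 (p - 1),
          (2 : ℚ_[p]) ^ k / ((2 * (k : ℚ_[p]) + 1) * (Nat.choose (2 * k) k : ℚ_[p]))) -
        ((-1 : ℚ_[p]) ^ ((p - 1) / 2) - (p : ℚ_[p])) =
      (p : ℚ_[p]) ^ 2 * (c : ℚ_[p]) := by
  have hprime := (Fact.out : p.Prime)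
  obtain ⟨h, hph⟩ : ∃ h, p = 2*h+1 := by
    obtain ⟨h, hh⟩ := hp; exact ⟨h, by omega⟩
  have hh2 : (p-1)/2 = h := by omega
  have hppos : 0 < p := by omega
  set t : ℕ → ℚ_[p] := fun k => (2 : ℚ_[p]) ^ k / ((2 * (k : ℚ_[p]) + 1) * ((2*k).choose k : ℚ_[p])) with ht
  set S : ℚ_[p] := ∑ k ∈ range p, t k with hS
  set T : ℕ → ℕ := fun n => ∑ j ∈ range (n+1), p.choose j with hT
  set F : ℕ → ℚ_[p] := fun n => (p : ℚ_[p]) * ((-1:ℚ_[p])^n / (2*(n:ℚ_[p])+1)) * (2 - 2*(T n : ℚ_[p])/2^p) with hF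
  -- Step 1: statement LHS = p*S - (-1)^h
  have hIc : Finset.Icc 1 (p-1) = Finset.Ico 1 p := by
    rw [← Finset.Ico_add_one_right_eq_Icc]
    congr 1
    omega
  have hsplit : S = t 0 + ∑ k ∈ Finset.Icc 1 (p-1), t k := by
    rw [hS, Finset.range_eq_Ico, Finset.sum_eq_sum_Ico_succ_bot hppos, hIc]
  have ht0 : t 0 = 1 := by rw [ht]; norm_num
  -- Step 2: p*S = ∑ F
  have hS3 : S = ∑ n ∈ range p, ((-1:ℚ_[p])^n / (2*(n:ℚ_[p])+1)) * (2 - 2*(T n : ℚ_[p])/2^p) := by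
    have e1 : ∀ k ∈ range p, t k
        = ∑ n ∈ range (k+1), ((-1:ℚ_[p])^n * (k.choose n : ℚ_[p])/(2*(n:ℚ_[p])+1) * (1/2^k)) := by
      intro k _
      rw [ht]
      simp only []
      rw [term_eq, ← J_eval, Finset.mul_sum]
      exact Finset.sum_congr rfl fun n _ => by ring
    rw [hS, Finset.sum_congr rfl e1, swap_sum]
    refine Finset.sum_congr rfl fun n hn => ?_
    have hn' : n ≤ p := by have := mem_range.mp hn; omega
    have e2 : ∑ k ∈ Ico n p, ((-1:ℚ_[p])^n * (k.choose n : ℚ_[p])/(2*(n:ℚ_[p])+1) * (1/2^k))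
        = ((-1:ℚ_[p])^n / (2*(n:ℚ_[p])+1)) * ∑ k ∈ Ico n p, ((k.choose n : ℚ_[p]) / 2^k) := by
      rw [Finset.mul_sum]
      exact Finset.sum_congr rfl fun k _ => by ring
    rw [e2, starG n p hn']
    have : ((T n : ℕ) : ℚ_[p]) = ∑ j ∈ range (n+1), (p.choose j : ℚ_[p]) := by
      rw [hT]; push_cast; ring
    rw [this]
  have hS2 : (p : ℚ_[p]) * S = ∑ n ∈ range p, F n := by
    rw [hS3, Finset.mul_sum]
    exact Finset.sum_congr rfl fun n _ => by rw [hF]; ring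
  -- Step 3: F h = (-1)^h
  have hFh : F h = (-1:ℚ_[p])^h := by
    have hTh : T h = 4^h := by
      rw [hT]
      simp only []
      rw [show p = 2*h+1 from hph]
      exact Nat.sum_range_choose_halfway h
    have h2p : (2:ℚ_[p])^p = 2 * 4^h := by
      have e : (2:ℚ_[p])^p = (2:ℚ_[p])^(2*h+1) := congrArg (fun e : ℕ => (2:ℚ_[p])^e) hph
      rw [e, pow_succ, pow_mul]
      norm_num
      ring
    have hpcast : (p : ℚ_[p]) = 2*(h:ℚ_[p])+1 := by
      have e : ((p:ℕ) : ℚ_[p]) = ((2*h+1 : ℕ) : ℚ_[p]) := congrArg _ hph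
      rw [e]; push_cast; ring
    have h4 : ((4:ℚ_[p]))^h ≠ 0 := pow_ne_zero _ (by norm_num)
    have hpne : (p : ℚ_[p]) ≠ 0 := Nat.cast_ne_zero.2 (by omega)
    rw [hF]
    simp only []
    rw [hTh, h2p, ← hpcast]
    push_cast
    field_simp
    ring
  -- Step 4: norm bound
  have hp2 : p ≠ 2 := by omega
  have h2unit : ‖(2:ℚ_[p])‖ = 1 := by
    have := unit_norm (p := p) 2 (by
      intro hd
      have := (Nat.prime_dvd_prime_iff_eq hprime Nat.prime_two).1 hd
      omega)
    simpa using this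
  have hTd : ∀ a, a < p → (p:ℤ) ∣ (T a : ℤ) - 1 := by
    intro a ha
    have e : (T a : ℤ) = 1 + ∑ j ∈ Ico 1 (a+1), (p.choose j : ℤ) := by
      rw [hT]
      simp only []
      rw [Finset.range_eq_Ico, Finset.sum_eq_sum_Ico_succ_bot (by omega : 0 < a+1)]
      push_cast
      simp [Nat.choose_zero_right]
    rw [e]
    have : (p:ℤ) ∣ ∑ j ∈ Ico 1 (a+1), (p.choose j : ℤ) := by
      apply Finset.dvd_sum
      intro j hj
      have hj' := Finset.mem_Ico.mp hj
      exact_mod_cast Int.natCast_dvd_natCast.2 (hprime.dvd_choose_self (by omega) (by omega))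
    simpa using this
  have hnorm : ‖(p : ℚ_[p]) * S - (-1:ℚ_[p])^h‖ ≤ ‖((p:ℚ_[p]))^2‖ := by
    have hhp : h ∈ range p := by rw [mem_range]; omega
    have e : (p:ℚ_[p]) * S - (-1:ℚ_[p])^h = ∑ n ∈ (range p).erase h, F n := by
      rw [hS2, ← Finset.sum_erase_add _ _ hhp, hFh]
      ring
    have hrefl : ∑ n ∈ (range p).erase h, F n = ∑ n ∈ (range p).erase h, F (p-1-n) := by
      apply Finset.sum_nbij' (fun n => p-1-n) (fun n => p-1-n)
      · intro a ha
        have h1 := Finset.mem_erase.mp ha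
        have h2 := mem_range.mp h1.2
        rw [Finset.mem_erase, mem_range]
        constructor
        · intro hc; apply h1.1; omega
        · omega
      · intro a ha
        have h1 := Finset.mem_erase.mp ha
        have h2 := mem_range.mp h1.2
        rw [Finset.mem_erase, mem_range]
        constructor
        · intro hc; apply h1.1; omega
        · omega
      · intro a ha
        have h2 := mem_range.mp (Finset.mem_erase.mp ha).2
        omega
      · intro a ha
        have h2 := mem_range.mp (Finset.mem_erase.mp ha).2
        omega
      · intro a ha
        have h2 := mem_range.mp (Finset.mem_erase.mp ha).2
        congr 1
        omega
    have e2 : (p:ℚ_[p]) * S - (-1:ℚ_[p])^h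
        = (1/2) * ∑ n ∈ (range p).erase h, (F n + F (p-1-n)) := by
      rw [Finset.sum_add_distrib, ← hrefl, ← e]
      ring
    rw [e2, norm_mul]
    have h12 : ‖(1/2 : ℚ_[p])‖ = 1 := by
      rw [norm_div, h2unit, norm_one]
      norm_num
    rw [h12, one_mul]
    apply norm_sum_le_padic _ _ _ (norm_nonneg _)
    intro n hn
    have hn1 := Finset.mem_erase.mp hn
    have hnp : n < p := mem_range.mp hn1.2
    have hnh : n ≠ h := hn1.1
    set m' := p - 1 - n with hm'
    have hm'p : m' < p := by omega
    have hm'h : m' ≠ h := by omega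
    -- parity
    have hpar : (-1:ℚ_[p])^(m') = (-1:ℚ_[p])^n := by
      have hadd : m' + 2*n = (p-1) + n := by omega
      have e3 : ((-1:ℚ_[p])^(m')) * ((-1:ℚ_[p])^(2*n)) = (-1:ℚ_[p])^(p-1) * (-1:ℚ_[p])^n := by
        rw [← pow_add, hadd, pow_add]
      have h2n : (-1:ℚ_[p])^(2*n) = 1 := by rw [pow_mul]; norm_num
      have hp1 : (-1:ℚ_[p])^(p-1) = 1 := by
        rw [show p-1 = 2*h from by omega, pow_mul]; norm_num
      rw [h2n, hp1, mul_one, one_mul] at e3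
      exact e3
    -- the integer M
    set A : ℤ := 2^p - (T n : ℤ) with hA
    set B : ℤ := 2^p - (T m' : ℤ) with hB
    set M : ℤ := A * (2*(m':ℤ)+1) + B * (2*(n:ℤ)+1) with hM
    have hMdvd : (p:ℤ) ∣ M := by
      have hMeq : M = 2*(p:ℤ)*A + (((T n : ℤ) - 1) - ((T m' : ℤ) - 1)) * (2*(n:ℤ)+1) := by
        rw [hM, hA, hB, show ((m':ℕ):ℤ) = (p:ℤ)-1-(n:ℤ) from by omega]
        ring
      rw [hMeq]
      exact dvd_add ⟨2*A, by ring⟩ (((hTd n hnp).sub (hTd m' hm'p)).mul_right _)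
    obtain ⟨M0, hM0⟩ := hMdvd
    have hc1 : (2*(n:ℚ_[p])+1) = ((2*n+1:ℕ):ℚ_[p]) := by push_cast; ring
    have hc2 : (2*((m':ℕ):ℚ_[p])+1) = ((2*m'+1:ℕ):ℚ_[p]) := by push_cast; ring
    have hd1 : (2*(n:ℚ_[p])+1) ≠ 0 := by
      rw [hc1]; exact Nat.cast_ne_zero.2 (by omega)
    have hd2 : (2*((m':ℕ):ℚ_[p])+1) ≠ 0 := by
      rw [hc2]; exact Nat.cast_ne_zero.2 (by omega)
    have hd3 : (2:ℚ_[p])^p ≠ 0 := pow_ne_zero _ (by norm_num)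
    have hkey : F n + F (p-1-n)
        = (p:ℚ_[p]) * 2 * (-1:ℚ_[p])^n * ((M:ℤ):ℚ_[p])
          / ((2*(n:ℚ_[p])+1) * (2*((m':ℕ):ℚ_[p])+1) * (2:ℚ_[p])^p) := by
      rw [hF]
      simp only []
      rw [← hm', hpar, hM, hA, hB]
      push_cast
      field_simp
    rw [hkey, hM0]
    have hcast : (((p:ℤ)*M0 : ℤ):ℚ_[p]) = (p:ℚ_[p]) * ((M0:ℤ):ℚ_[p]) := by push_cast; ring
    rw [hcast]
    have hu1 : ‖(2*(n:ℚ_[p])+1)‖ = 1 := by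
      rw [hc1]; exact unit_norm _ (not_dvd_odd_lt hprime h n hph hnp hnh)
    have hu2 : ‖(2*((m':ℕ):ℚ_[p])+1)‖ = 1 := by
      rw [hc2]; exact unit_norm _ (not_dvd_odd_lt hprime h m' hph hm'p hm'h)
    have hM0n : ‖((M0:ℤ):ℚ_[p])‖ ≤ 1 := Padic.norm_int_le_one _
    have hpn : (0:ℝ) ≤ ‖((p:ℕ):ℚ_[p])‖ := norm_nonneg _
    simp only [norm_div, norm_mul, norm_pow, norm_neg, norm_one, one_pow, hu1, hu2, h2unit,
      mul_one, one_mul, div_one]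
    nlinarith [hM0n, hpn]
  -- conclude
  have hp0 : ((p:ℚ_[p]))^2 ≠ 0 := pow_ne_zero _ (Nat.cast_ne_zero.2 (by omega))
  have hmem : ‖((p : ℚ_[p]) * S - (-1:ℚ_[p])^h) / ((p:ℚ_[p]))^2‖ ≤ 1 := by
    rw [norm_div]
    apply div_le_one_of_le₀ hnorm (norm_nonneg _)
  refine ⟨⟨((p : ℚ_[p]) * S - (-1:ℚ_[p])^h) / ((p:ℚ_[p]))^2, hmem⟩, ?_⟩
  have hLHS : (p : ℚ_[p]) * (∑ k ∈ Finset.Icc 1 (p - 1),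
          (2 : ℚ_[p]) ^ k / ((2 * (k : ℚ_[p]) + 1) * (Nat.choose (2 * k) k : ℚ_[p]))) -
        ((-1 : ℚ_[p]) ^ ((p - 1) / 2) - (p : ℚ_[p]))
      = (p : ℚ_[p]) * S - (-1:ℚ_[p])^h := by
    rw [hh2, hsplit, ht0]
    ring
  rw [hLHS]
  have hcoe : ((⟨((p : ℚ_[p]) * S - (-1:ℚ_[p])^h) / ((p:ℚ_[p]))^2, hmem⟩ : ℤ_[p]) : ℚ_[p])
      = ((p : ℚ_[p]) * S - (-1:ℚ_[p])^h) / ((p:ℚ_[p]))^2 := rfl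
  rw [hcoe]
  field_simp
  rw [mul_div_cancel_left₀ _ (Nat.cast_ne_zero.2 (by omega) : (p:ℚ_[p]) ≠ 0)]
end

section
/- Let n, m be nonnegative integers with m ≥ 1, and let r, s be integers with s ≥ 0. Then ∑_{0 ≤ k < n, k ≡ r (mod m)} (−1)^{(k−r)/m} · k^s = −(m^s/2) · ( (−1)^{⌊(r−n)/m⌋} · E_s(n/m + {(r−n)/m}) − (−1)^{⌊r/m⌋} · E_s({r/m}) ), where E_s is the s-th Euler polynomial and {a} denotes the fractional part of a. -/
open Finset

/-- Euler polynomials, defined by the recurrence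
`E_n(x) = x^n - (1/2) ∑_{k<n} C(n,k) E_k(x)` equivalent to the generating function
`2e^{xz}/(e^z+1) = ∑ E_n(x) z^n/n!`. -/
noncomputable def eulerPoly : ℕ → Polynomial ℚ
  | n => Polynomial.X ^ n - Polynomial.C (1/2 : ℚ) *
      ∑ k ∈ (Finset.range n).attach, Polynomial.C ((n.choose k.1 : ℚ)) * eulerPoly k.1
  decreasing_by exact Finset.mem_range.mp k.2

lemma eulerPoly_eval (n : ℕ) (x : ℚ) :
    (eulerPoly n).eval x =
      x ^ n - (1/2) * ∑ k ∈ Finset.range n, (n.choose k : ℚ) * (eulerPoly k).eval x := by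
  rw [eulerPoly]
  rw [← Finset.sum_attach (Finset.range n) (fun k => (n.choose k : ℚ) * (eulerPoly k).eval x)]
  simp [Polynomial.eval_finset_sum]

lemma euler_add (n : ℕ) (x : ℚ) :
    (eulerPoly n).eval (x + 1) + (eulerPoly n).eval x = 2 * x ^ n := by
  induction n using Nat.strong_induction_on with
  | _ n ih =>
    rw [eulerPoly_eval, eulerPoly_eval]
    have hsum : ∑ k ∈ range n, (n.choose k : ℚ) * (eulerPoly k).eval (x+1)
        + ∑ k ∈ range n, (n.choose k : ℚ) * (eulerPoly k).eval x
        = 2 * ((x + 1) ^ n - x ^ n) := by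
      rw [← Finset.sum_add_distrib]
      have : ∀ k ∈ range n, (n.choose k : ℚ) * (eulerPoly k).eval (x+1)
          + (n.choose k : ℚ) * (eulerPoly k).eval x = 2 * ((n.choose k : ℚ) * x ^ k) := by
        intro k hk
        rw [← mul_add, ih k (Finset.mem_range.mp hk)]; ring
      rw [Finset.sum_congr rfl this, ← Finset.mul_sum]
      have hbin : (x + 1) ^ n = ∑ k ∈ range (n+1), x ^ k * (n.choose k : ℚ) := by
        rw [add_pow]; simp
      rw [Finset.sum_range_succ] at hbin
      have : ∑ k ∈ range n, (n.choose k : ℚ) * x ^ k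
          = ∑ k ∈ range n, x ^ k * (n.choose k : ℚ) := by
        exact Finset.sum_congr rfl fun k _ => mul_comm _ _
      rw [this]
      simp at hbin
      linarith
    linarith

lemma neg_one_zpow_neg (z : ℤ) : (-1:ℚ)^(-z) = (-1:ℚ)^z := by
  rcases Int.even_or_odd z with h | h
  · rw [h.neg_one_zpow, h.neg.neg_one_zpow]
  · rw [h.neg_one_zpow, h.neg.neg_one_zpow]

lemma fract_q (m : ℕ) (hm : 1 ≤ m) (a : ℤ) :
    Int.fract ((a:ℚ)/(m:ℚ)) = ((a % (m:ℤ) : ℤ) : ℚ)/(m:ℚ) := by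
  have hm0 : (m:ℚ) ≠ 0 := Nat.cast_ne_zero.mpr (by omega)
  rw [Int.fract, Rat.floor_intCast_div_natCast, Int.emod_def]
  push_cast
  field_simp

lemma key (m : ℕ) (hm : 1 ≤ m) (r : ℤ) (s : ℕ) : ∀ n : ℕ,
    ∑ k ∈ Finset.range n,
      (if (m:ℤ) ∣ ((k:ℤ) - r) then (-1:ℚ)^(((k:ℤ)-r)/(m:ℤ)) * (k:ℚ)^s else 0)
    = -((m:ℚ)^s/2) *
        ((-1:ℚ)^⌊((r:ℚ)-(n:ℚ))/(m:ℚ)⌋ *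
            (eulerPoly s).eval ((n:ℚ)/(m:ℚ) + Int.fract (((r:ℚ)-(n:ℚ))/(m:ℚ)))
          - (-1:ℚ)^⌊(r:ℚ)/(m:ℚ)⌋ * (eulerPoly s).eval (Int.fract ((r:ℚ)/(m:ℚ)))) := by
  have hm0 : (m:ℚ) ≠ 0 := Nat.cast_ne_zero.mpr (by omega)
  have hmZ : (0:ℤ) < (m:ℤ) := by exact_mod_cast hm
  intro n
  induction n with
  | zero => simp
  | succ n ih =>
    rw [Finset.sum_range_succ, ih]
    set a : ℤ := r - (n:ℤ) with ha_def
    have hca : ((r:ℚ) - (n:ℚ)) = ((a:ℤ) : ℚ) := by push_cast [ha_def]; ring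
    have hca1 : ((r:ℚ) - ((n:ℕ)+1:ℕ)) = (((a - 1:ℤ)) : ℚ) := by push_cast [ha_def]; ring
    by_cases h : (m:ℤ) ∣ ((n:ℤ) - r)
    · -- a % m = 0
      have hd : (m:ℤ) ∣ a := by
        rw [ha_def]
        simpa [neg_sub] using h.neg_right
      obtain ⟨q, hq⟩ : ∃ q, a = (m:ℤ) * q := hd
      have hdivq : a / (m:ℤ) = q := by
        rw [hq, Int.mul_ediv_cancel_left _ (by omega)]
      have hmod : a % (m:ℤ) = 0 := by rw [hq]; exact Int.mul_emod_right _ _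
      have h1 : (a - 1) / (m:ℤ) = q - 1 ∧ (a - 1) % (m:ℤ) = (m:ℤ) - 1 := by
        rw [Int.ediv_emod_unique hmZ]
        refine ⟨by rw [hq]; ring, by omega, by omega⟩
      -- floors and fracts
      have hf0 : ⌊((r:ℚ)-(n:ℚ))/(m:ℚ)⌋ = q := by
        rw [hca, Rat.floor_intCast_div_natCast, hdivq]
      have hfr0 : Int.fract (((r:ℚ)-(n:ℚ))/(m:ℚ)) = 0 := by
        rw [hca, fract_q m hm, hmod]; simp
      have hf1 : ⌊((r:ℚ)-((n:ℕ)+1:ℕ))/(m:ℚ)⌋ = q - 1 := by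
        rw [hca1, Rat.floor_intCast_div_natCast, h1.1]
      have hfr1 : Int.fract (((r:ℚ)-((n:ℕ)+1:ℕ))/(m:ℚ)) = 1 - 1/(m:ℚ) := by
        rw [hca1, fract_q m hm, h1.2]
        push_cast
        try field_simp
        try ring
      have harg : (((n:ℕ)+1:ℕ):ℚ)/(m:ℚ) + (1 - 1/(m:ℚ)) = (n:ℚ)/(m:ℚ) + 1 := by
        push_cast
        field_simp
        try ring
      have hexp : ((n:ℤ) - r) / (m:ℤ) = -q := by
        have hnr : (n:ℤ) - r = (m:ℤ) * (-q) := by rw [mul_neg, ← hq]; omega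
        rw [hnr, Int.mul_ediv_cancel_left _ (by omega)]
      rw [if_pos h, hf0, hfr0, hf1, hfr1, harg, hexp, neg_one_zpow_neg, add_zero]
      have heuler := euler_add s ((n:ℚ)/(m:ℚ))
      have hpow : ((m:ℚ))^s * ((n:ℚ)/(m:ℚ))^s = (n:ℚ)^s := by
        rw [← mul_pow]; field_simp
      have hq1 : (-1:ℚ)^(q-1) = -(-1:ℚ)^q := by
        rw [sub_eq_add_neg, zpow_add₀ (by norm_num : (-1:ℚ) ≠ 0)]
        norm_num
      rw [hq1]
      linear_combination (-((m:ℚ)^s/2) * ((-1:ℚ)^q)) * heuler - ((-1:ℚ)^q) * hpow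
    · -- not divisible
      have hd : ¬ (m:ℤ) ∣ a := by
        intro hc
        rw [ha_def] at hc
        exact h (by simpa [neg_sub] using hc.neg_right)
      have hmod : 1 ≤ a % (m:ℤ) := by
        have h0 : 0 ≤ a % (m:ℤ) := Int.emod_nonneg a (by omega)
        have : a % (m:ℤ) ≠ 0 := fun hc => hd (Int.dvd_of_emod_eq_zero hc)
        omega
      have hmodlt : a % (m:ℤ) < (m:ℤ) := Int.emod_lt_of_pos a hmZ
      have haq := Int.mul_ediv_add_emod a (m:ℤ)
      have h1 : (a - 1) / (m:ℤ) = a / (m:ℤ) ∧ (a - 1) % (m:ℤ) = a % (m:ℤ) - 1 := by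
        rw [Int.ediv_emod_unique hmZ]
        refine ⟨by omega, by omega, by omega⟩
      have hf1 : ⌊((r:ℚ)-((n:ℕ)+1:ℕ))/(m:ℚ)⌋ = ⌊((r:ℚ)-(n:ℚ))/(m:ℚ)⌋ := by
        rw [hca1, hca, Rat.floor_intCast_div_natCast, Rat.floor_intCast_div_natCast, h1.1]
      have hfr1 : Int.fract (((r:ℚ)-((n:ℕ)+1:ℕ))/(m:ℚ))
          = Int.fract (((r:ℚ)-(n:ℚ))/(m:ℚ)) - 1/(m:ℚ) := by
        rw [hca1, hca, fract_q m hm, fract_q m hm, h1.2]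
        push_cast
        ring
      have harg : (((n:ℕ)+1:ℕ):ℚ)/(m:ℚ) + (Int.fract (((r:ℚ)-(n:ℚ))/(m:ℚ)) - 1/(m:ℚ))
          = (n:ℚ)/(m:ℚ) + Int.fract (((r:ℚ)-(n:ℚ))/(m:ℚ)) := by
        push_cast
        field_simp
        try ring
      rw [if_neg h, hf1, hfr1, harg]
      ring

theorem stmt9 (n m : ℕ) (hm : 1 ≤ m) (r : ℤ) (s : ℕ) :
    ∑ k ∈ (Finset.range n).filter (fun k : ℕ => (m : ℤ) ∣ ((k : ℤ) - r)),
        (-1 : ℚ) ^ (((k : ℤ) - r) / (m : ℤ)) * (k : ℚ) ^ s =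
      -((m : ℚ) ^ s / 2) *
        ((-1 : ℚ) ^ ⌊((r : ℚ) - (n : ℚ)) / (m : ℚ)⌋ *
            (eulerPoly s).eval ((n : ℚ) / (m : ℚ) + Int.fract (((r : ℚ) - (n : ℚ)) / (m : ℚ))) -
          (-1 : ℚ) ^ ⌊(r : ℚ) / (m : ℚ)⌋ *
            (eulerPoly s).eval (Int.fract ((r : ℚ) / (m : ℚ)))) := by
  rw [Finset.sum_filter]
  exact key m hm r s n
end
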